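/- Let x_j = a + j·h be a uniform grid and let p_k^r denote the Lagrange interpolating polynomial of degree ≤ r of f at nodes {x_{i-r+k}, ..., x_{i+k}}, for k = 0, ..., r-1, and let p_0^{2r-1} denote the Lagrange interpolating polynomial of f at all 2r nodes {x_{i-r}, ..., x_{i+r-1}}. Then at the midpoint x_{i-1/2}, p_0^{2r-1}(x_{i-1/2}) = ∑_{k=0}^{r-1} C̄_k^r · p_k^r(x_{i-1/2}), where C̄_k^r = binom(2r, 2k+1)/2^(2r-1). -/

import Mathlib

open Lagrange Polynomial

open Finset

section QQ
variable (a h : ℝ) (f : ℝ → ℝ) (i : ℤ)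

/-- Evaluation of the Lagrange interpolant of `f` on integer nodes `c..d` of the uniform
grid at the midpoint `x_{i-1/2}`. -/
noncomputable def Qe (c d : ℤ) : ℝ :=
  (Lagrange.interpolate (Finset.Icc c d) (fun j : ℤ => a + (j : ℝ) * h)
    (fun j : ℤ => f (a + (j : ℝ) * h))).eval (a + ((i : ℝ) - 1 / 2) * h)

theorem neville {F : Type*} [Field F] {ι : Type*} [DecidableEq ι]
    {s : Finset ι} {v : ι → F} (hvs : Set.InjOn v s) {c d : ι}
    (hc : c ∈ s) (hd : d ∈ s) (hcd : c ≠ d) (f' : ι → F) :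
    C (v d - v c) * interpolate s v f'
      = (X - C (v c)) * interpolate (s.erase c) v f'
        - (X - C (v d)) * interpolate (s.erase d) v f' := by
  have hec : Set.InjOn v (s.erase c) := hvs.mono (by simp [Finset.coe_subset, Finset.erase_subset])
  have hed : Set.InjOn v (s.erase d) := hvs.mono (by simp [Finset.coe_subset, Finset.erase_subset])
  have hcard : 1 ≤ #s := Finset.card_pos.mpr ⟨c, hc⟩
  have hdeg1 : ((X - C (v c)) * interpolate (s.erase c) v f').degree < (#s : WithBot ℕ) := by
    refine lt_of_le_of_lt (degree_mul_le _ _) ?_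
    rw [degree_X_sub_C]
    have h1 := degree_interpolate_lt f' hec
    rw [Finset.card_erase_of_mem hc] at h1
    calc 1 + (interpolate (s.erase c) v f').degree < 1 + ((#s - 1 : ℕ) : WithBot ℕ) := by
          exact_mod_cast (WithBot.add_lt_add_iff_left (by simp)).mpr h1
      _ = (#s : WithBot ℕ) := by
          rw [show ((1 : WithBot ℕ)) = ((1:ℕ) : WithBot ℕ) from rfl, ← Nat.cast_add]
          congr 1; omega
  have hdeg2 : ((X - C (v d)) * interpolate (s.erase d) v f').degree < (#s : WithBot ℕ) := by
    refine lt_of_le_of_lt (degree_mul_le _ _) ?_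
    rw [degree_X_sub_C]
    have h1 := degree_interpolate_lt f' hed
    rw [Finset.card_erase_of_mem hd] at h1
    calc 1 + (interpolate (s.erase d) v f').degree < 1 + ((#s - 1 : ℕ) : WithBot ℕ) := by
          exact_mod_cast (WithBot.add_lt_add_iff_left (by simp)).mpr h1
      _ = (#s : WithBot ℕ) := by
          rw [show ((1 : WithBot ℕ)) = ((1:ℕ) : WithBot ℕ) from rfl, ← Nat.cast_add]
          congr 1; omega
  refine eq_of_degrees_lt_of_eval_index_eq (s := s) hvs ?_ ?_ ?_
  · refine lt_of_le_of_lt (degree_mul_le _ _) ?_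
    refine lt_of_le_of_lt (add_le_add degree_C_le le_rfl) ?_
    simpa using degree_interpolate_lt f' hvs
  · exact lt_of_le_of_lt (degree_sub_le _ _) (max_lt hdeg1 hdeg2)
  · intro j hj
    simp only [eval_mul, eval_sub, eval_C, eval_X]
    by_cases hjc : j = c
    · subst hjc
      rw [eval_interpolate_at_node f' hvs hj,
        eval_interpolate_at_node f' hed (Finset.mem_erase.mpr ⟨hcd, hj⟩)]
      ring
    · by_cases hjd : j = d
      · subst hjd
        rw [eval_interpolate_at_node f' hvs hj,
          eval_interpolate_at_node f' hec (Finset.mem_erase.mpr ⟨fun h => hcd h.symm, hj⟩)]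
        ring
      · rw [eval_interpolate_at_node f' hvs hj,
          eval_interpolate_at_node f' hec (Finset.mem_erase.mpr ⟨hjc, hj⟩),
          eval_interpolate_at_node f' hed (Finset.mem_erase.mpr ⟨hjd, hj⟩)]
        ring

variable {a h f i} in
lemma x_injOn (hh : h ≠ 0) (s : Finset ℤ) :
    Set.InjOn (fun j : ℤ => a + (j : ℝ) * h) s := by
  intro j1 _ j2 _ he
  simp only at he
  have h2 : (j1 : ℝ) * h = (j2 : ℝ) * h := by linarith
  have := mul_right_cancel₀ hh h2
  exact_mod_cast this

lemma nevilleQ (hh : h ≠ 0) (c d : ℤ) (hcd : c < d) :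
    Qe a h f i c d
      = (((i:ℝ) - 1/2 - c) * Qe a h f i (c+1) d + ((d:ℝ) + 1/2 - i) * Qe a h f i c (d-1))
        / ((d:ℝ) - c) := by
  have hdc : ((d:ℝ) - c) ≠ 0 := by
    have : (c:ℝ) < d := by exact_mod_cast hcd
    linarith
  rw [eq_div_iff hdc]
  set v : ℤ → ℝ := fun j : ℤ => a + (j : ℝ) * h with hv
  set g : ℤ → ℝ := fun j : ℤ => f (a + (j : ℝ) * h) with hg
  have hc : c ∈ Finset.Icc c d := by simp; omega
  have hd : d ∈ Finset.Icc c d := by simp; omega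
  have hne : c ≠ d := by omega
  have key := congrArg (Polynomial.eval (a + ((i : ℝ) - 1 / 2) * h))
    (neville (x_injOn (a := a) hh (Finset.Icc c d)) hc hd hne g)
  rw [show (Finset.Icc c d).erase c = Finset.Icc (c+1) d from by ext j; simp [Finset.mem_erase],
      show (Finset.Icc c d).erase d = Finset.Icc c (d-1) from by ext j; simp [Finset.mem_erase]]
    at key
  simp only [eval_mul, eval_sub, eval_C, eval_X] at key
  unfold Qe
  apply mul_right_cancel₀ hh
  linear_combination key



/-- Product `∏_{j<q} (r - 1/2 - j)`. -/
noncomputable def Dw (r q : ℕ) : ℝ := ∏ j ∈ Finset.range q, ((r : ℝ) - 1/2 - j)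

/-- Intermediate weights in the Neville expansion. -/
noncomputable def Ww (r M p : ℕ) : ℝ :=
  (M.choose p) * Dw r p * Dw r (M - p) * (Nat.factorial (2*r - 1 - M)) / (Nat.factorial (2*r - 1))

lemma Dw_zero (r : ℕ) : Dw r 0 = 1 := by simp [Dw]

lemma Dw_succ (r q : ℕ) : Dw r (q+1) = Dw r q * ((r : ℝ) - q - 1/2) := by
  unfold Dw; rw [Finset.prod_range_succ]; ring

lemma Ww_zero (r : ℕ) : Ww r 0 0 = 1 := by
  have : (Nat.factorial (2*r-1) : ℝ) ≠ 0 := by positivity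
  simp [Ww, Dw]
  exact Nat.factorial_ne_zero _

lemma w0 (r M : ℕ) (hM : M + 2 ≤ r) :
    Ww r (M+1) 0 = Ww r M 0 * ((r:ℝ) - 1/2 - M) / (2*(r:ℝ) - 1 - M) := by
  obtain ⟨e, he⟩ : ∃ e, r = M + e + 2 := ⟨r - M - 2, by omega⟩
  subst he
  unfold Ww
  rw [show 2*(M+e+2) - 1 - (M+1) = M + 2*e + 2 by omega,
      show 2*(M+e+2) - 1 - M = M + 2*e + 3 by omega,
      show (M+1) - 0 = M+1 by omega, show M - 0 = M by omega,
      Dw_succ]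
  have h1 : (Nat.factorial (M + 2*e + 3) : ℝ) = (M + 2*e + 3) * Nat.factorial (M + 2*e + 2) := by
    exact_mod_cast Nat.factorial_succ (M + 2*e + 2)
  have h2 : (Nat.factorial (2*(M+e+2) - 1) : ℝ) ≠ 0 := by positivity
  have h3 : (2*((M:ℝ)+e+2) - 1 - M) ≠ 0 := by push_cast; nlinarith [Nat.cast_nonneg (α := ℝ) e, Nat.cast_nonneg (α := ℝ) M]
  rw [h1]
  push_cast at h3 ⊢
  field_simp
  simp only [Nat.choose_zero_right]
  ring

lemma wlast (r M : ℕ) (hM : M + 2 ≤ r) :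
    Ww r (M+1) (M+1) = Ww r M M * ((r:ℝ) - M - 1/2) / (2*(r:ℝ) - 1 - M) := by
  obtain ⟨e, he⟩ : ∃ e, r = M + e + 2 := ⟨r - M - 2, by omega⟩
  subst he
  unfold Ww
  rw [show 2*(M+e+2) - 1 - (M+1) = M + 2*e + 2 by omega,
      show 2*(M+e+2) - 1 - M = M + 2*e + 3 by omega,
      show (M+1) - (M+1) = 0 by omega, show M - M = 0 by omega,
      Dw_succ, Dw_zero]
  have h1 : (Nat.factorial (M + 2*e + 3) : ℝ) = (M + 2*e + 3) * Nat.factorial (M + 2*e + 2) := by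
    exact_mod_cast Nat.factorial_succ (M + 2*e + 2)
  have h2 : (Nat.factorial (2*(M+e+2) - 1) : ℝ) ≠ 0 := by positivity
  have h3 : (2*((M:ℝ)+e+2) - 1 - M) ≠ 0 := by nlinarith [Nat.cast_nonneg (α := ℝ) e, Nat.cast_nonneg (α := ℝ) M]
  rw [h1]
  simp only [Nat.choose_self]
  push_cast at h3 ⊢
  field_simp
  ring

lemma wmid (r M p : ℕ) (hp : p + 1 ≤ M) (hM : M + 2 ≤ r) :
    Ww r (M+1) (p+1) = Ww r M p * ((r:ℝ) - p - 1/2) / (2*(r:ℝ) - 1 - M)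
      + Ww r M (p+1) * ((r:ℝ) - 1/2 - M + p + 1) / (2*(r:ℝ) - 1 - M) := by
  obtain ⟨k, hk⟩ : ∃ k, M = p + k + 1 := ⟨M - p - 1, by omega⟩
  subst hk
  obtain ⟨e, he⟩ : ∃ e, r = p + k + e + 3 := ⟨r - p - k - 3, by omega⟩
  subst he
  unfold Ww
  rw [show (p+k+1+1) - (p+1) = k + 1 by omega,
      show (p+k+1) - p = k + 1 by omega,
      show (p+k+1) - (p+1) = k by omega,
      show 2*(p+k+e+3) - 1 - (p+k+1+1) = p + k + 2*e + 3 by omega,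
      show 2*(p+k+e+3) - 1 - (p+k+1) = p + k + 2*e + 4 by omega,
      Nat.choose_succ_succ (p+k+1) p,
      Dw_succ, Dw_succ]
  have h1 : (Nat.factorial (p + k + 2*e + 4) : ℝ)
      = (p + k + 2*e + 4) * Nat.factorial (p + k + 2*e + 3) := by
    exact_mod_cast Nat.factorial_succ (p + k + 2*e + 3)
  have h2 : (Nat.factorial (2*(p+k+e+3) - 1) : ℝ) ≠ 0 := by positivity
  have h3 : (2*((p:ℝ)+k+e+3) - 1 - (p+k+1)) ≠ 0 := by
    nlinarith [Nat.cast_nonneg (α := ℝ) e, Nat.cast_nonneg (α := ℝ) p, Nat.cast_nonneg (α := ℝ) k]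
  rw [h1]
  have h4 : ((p:ℝ) + k + 2*e + 4) ≠ 0 := by positivity
  push_cast at h3 ⊢
  field_simp
  ring_nf
  field_simp
  ring

lemma Dval (r : ℕ) : ∀ q, q ≤ r →
    Dw r q * 2^(2*q) * (Nat.factorial r) * (Nat.factorial (2*r - 2*q))
      = (Nat.factorial (2*r)) * (Nat.factorial (r - q)) := by
  intro q
  induction q with
  | zero => intro _; simp [Dw_zero]; ring
  | succ q ih =>
    intro hq
    have IH := ih (by omega)
    obtain ⟨t, ht⟩ : ∃ t, r = q + t + 1 := ⟨r - q - 1, by omega⟩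
    subst ht
    rw [show 2*(q+t+1) - 2*(q+1) = 2*t by omega] 
    rw [show (q+t+1) - (q+1) = t by omega]
    rw [show 2*(q+t+1) - 2*q = 2*t + 2 by omega, show (q+t+1) - q = t + 1 by omega] at IH
    rw [Dw_succ]
    have e1 : (Nat.factorial (2*t+2) : ℝ) = (2*t+2) * ((2*t+1) * Nat.factorial (2*t)) := by
      rw [show 2*t+2 = (2*t+1)+1 by omega, Nat.factorial_succ, Nat.factorial_succ]
      push_cast; ring
    have e2 : (Nat.factorial (t+1) : ℝ) = (t+1) * Nat.factorial t := by
      exact_mod_cast Nat.factorial_succ t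
    rw [e1, e2] at IH
    have hc : ((2:ℝ)*t+2) * (2*t+1) ≠ 0 := by positivity
    apply mul_right_cancel₀ hc
    push_cast
    push_cast at IH
    linear_combination (4*((t:ℝ)+1/2)) * IH

lemma Wfinal (r p : ℕ) (hp : p + 1 ≤ r) :
    Ww r (r-1) p = (Nat.choose (2*r) (2*p+1) : ℝ) / 2^(2*r-1) := by
  obtain ⟨s, hs⟩ : ∃ s, r = p + s + 1 := ⟨r - p - 1, by omega⟩
  subst hs
  have D1 := Dval (p+s+1) p (by omega)
  have D2 := Dval (p+s+1) s (by omega)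
  rw [show 2*(p+s+1) - 2*p = 2*s+2 by omega, show (p+s+1) - p = s+1 by omega] at D1
  rw [show 2*(p+s+1) - 2*s = 2*p+2 by omega, show (p+s+1) - s = p+1 by omega] at D2
  unfold Ww
  rw [show (p+s+1) - 1 = p + s by omega, show (p+s) - p = s by omega,
      show 2*(p+s+1) - 1 - (p+s) = p + s + 1 by omega,
      show 2*(p+s+1) - 1 = 2*p + 2*s + 1 by omega]
  have hch1 : (Nat.choose (p+s) p : ℝ) = Nat.factorial (p+s) / (Nat.factorial p * Nat.factorial s) := by
    rw [Nat.cast_choose ℝ (by omega : p ≤ p + s)]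
    rw [show (p+s) - p = s by omega]
  have hch2 : (Nat.choose (2*(p+s+1)) (2*p+1) : ℝ)
      = Nat.factorial (2*(p+s+1)) / (Nat.factorial (2*p+1) * Nat.factorial (2*s+1)) := by
    rw [Nat.cast_choose ℝ (by omega : 2*p+1 ≤ 2*(p+s+1))]
    rw [show 2*(p+s+1) - (2*p+1) = 2*s+1 by omega]
  rw [hch1, hch2]
  -- expand factorials
  have f1 : (Nat.factorial (2*s+2) : ℝ) = (2*s+2) * Nat.factorial (2*s+1) := by
    exact_mod_cast Nat.factorial_succ (2*s+1)
  have f2 : (Nat.factorial (2*p+2) : ℝ) = (2*p+2) * Nat.factorial (2*p+1) := by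
    exact_mod_cast Nat.factorial_succ (2*p+1)
  have f3 : (Nat.factorial (s+1) : ℝ) = (s+1) * Nat.factorial s := by
    exact_mod_cast Nat.factorial_succ s
  have f4 : (Nat.factorial (p+1) : ℝ) = (p+1) * Nat.factorial p := by
    exact_mod_cast Nat.factorial_succ p
  have f5 : (Nat.factorial (2*p+2*s+2) : ℝ) = (2*p+2*s+2) * Nat.factorial (2*p+2*s+1) := by
    exact_mod_cast Nat.factorial_succ (2*p+2*s+1)
  have f6 : (Nat.factorial (p+s+1) : ℝ) = (p+s+1) * Nat.factorial (p+s) := by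
    exact_mod_cast Nat.factorial_succ (p+s)
  rw [f1, f3] at D1
  rw [f2, f4] at D2
  have h2r : (Nat.factorial (2*(p+s+1))) = Nat.factorial (2*p+2*s+2) := by congr 1; omega
  rw [h2r] at D1 D2 ⊢
  have hr1 : (Nat.factorial (p+s+1) : ℝ) ≠ 0 := by positivity
  have nz : ∀ n : ℕ, (Nat.factorial n : ℝ) ≠ 0 := fun n => by positivity
  -- solve for Dw values from D1 D2 and substitute
  have hD1 : Dw (p+s+1) p = (Nat.factorial (2*p+2*s+2) * ((s+1) * Nat.factorial s))
      / (2^(2*p) * Nat.factorial (p+s+1) * ((2*s+2) * Nat.factorial (2*s+1))) := by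
    rw [← D1]; field_simp
  have hD2 : Dw (p+s+1) s = (Nat.factorial (2*p+2*s+2) * ((p+1) * Nat.factorial p))
      / (2^(2*s) * Nat.factorial (p+s+1) * ((2*p+2) * Nat.factorial (2*p+1))) := by
    rw [← D2]; field_simp
  rw [hD1, hD2, f5, f6]
  push_cast
  field_simp
  ring

lemma mainInd (a h : ℝ) (hh : h ≠ 0) (r : ℕ) (hr : 1 ≤ r) (i : ℤ) (f : ℝ → ℝ) :
    ∀ M, M ≤ r - 1 →
    Qe a h f i (i - r) (i + r - 1)
      = ∑ p ∈ Finset.range (M+1), Ww r M p * Qe a h f i (i - (r:ℤ) + p) (i + (r:ℤ) - 1 - M + p) := by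
  intro M
  induction M with
  | zero =>
    intro _
    rw [Finset.sum_range_one, Ww_zero]
    norm_num
  | succ M ih =>
    intro hM1
    have hM2 : M + 2 ≤ r := by omega
    have hrM : (M:ℝ) + 2 ≤ r := by exact_mod_cast hM2
    have hM0 : (0:ℝ) ≤ M := Nat.cast_nonneg M
    have hnR : (2*(r:ℝ) - 1 - M) ≠ 0 := by nlinarith
    rw [ih (by omega)]
    have expand : ∀ p ∈ Finset.range (M+1),
        Ww r M p * Qe a h f i (i - (r:ℤ) + p) (i + (r:ℤ) - 1 - M + p)
          = (Ww r M p * ((r:ℝ) - p - 1/2) / (2*(r:ℝ)-1-M))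
              * Qe a h f i (i - (r:ℤ) + (p+1:ℕ)) (i + (r:ℤ) - 1 - ((M+1:ℕ):ℤ) + (p+1:ℕ))
            + (Ww r M p * ((r:ℝ) - 1/2 - M + p) / (2*(r:ℝ)-1-M))
              * Qe a h f i (i - (r:ℤ) + p) (i + (r:ℤ) - 1 - ((M+1:ℕ):ℤ) + p) := by
      intro p hp
      have hcd : i - (r:ℤ) + p < i + (r:ℤ) - 1 - M + p := by omega
      rw [nevilleQ a h f i hh _ _ hcd]
      rw [show (i - (r:ℤ) + p) + 1 = i - (r:ℤ) + ((p+1:ℕ):ℤ) from by push_cast; ring]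
      rw [show (i + (r:ℤ) - 1 - M + p) - 1 = i + (r:ℤ) - 1 - ((M+1:ℕ):ℤ) + (p:ℤ) from by push_cast; ring]
      rw [show (i + (r:ℤ) - 1 - (M:ℤ) + (p:ℤ)) = i + (r:ℤ) - 1 - ((M+1:ℕ):ℤ) + ((p+1:ℕ):ℤ) from by push_cast; ring]
      rw [show ((i:ℝ) - 1/2 - ((i - (r:ℤ) + (p:ℤ) : ℤ) : ℝ)) = (r:ℝ) - p - 1/2 from by push_cast; ring]
      rw [show (((i + (r:ℤ) - 1 - ((M+1:ℕ):ℤ) + ((p+1:ℕ):ℤ) : ℤ) : ℝ) + 1/2 - (i:ℝ)) = (r:ℝ) - 1/2 - M + p from by push_cast; ring]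
      rw [show (((i + (r:ℤ) - 1 - ((M+1:ℕ):ℤ) + ((p+1:ℕ):ℤ) : ℤ) : ℝ) - ((i - (r:ℤ) + (p:ℤ) : ℤ):ℝ)) = 2*(r:ℝ) - 1 - M from by push_cast; ring]
      field_simp
    rw [Finset.sum_congr rfl expand, Finset.sum_add_distrib, Finset.sum_range_succ, Finset.sum_range_succ']
    -- now handle RHS
    rw [Finset.sum_range_succ' _ (M+1), Finset.sum_range_succ _ M]
    rw [w0 r M hM2, wlast r M hM2]
    have mid : ∀ q ∈ Finset.range M,
        Ww r (M+1) (q+1) * Qe a h f i (i - (r:ℤ) + ((q+1:ℕ):ℤ)) (i + (r:ℤ) - 1 - ((M+1:ℕ):ℤ) + ((q+1:ℕ):ℤ))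
          = (Ww r M q * ((r:ℝ) - q - 1/2) / (2*(r:ℝ)-1-M))
              * Qe a h f i (i - (r:ℤ) + ((q+1:ℕ):ℤ)) (i + (r:ℤ) - 1 - ((M+1:ℕ):ℤ) + ((q+1:ℕ):ℤ))
            + (Ww r M (q+1) * ((r:ℝ) - 1/2 - M + (q+1:ℕ)) / (2*(r:ℝ)-1-M))
              * Qe a h f i (i - (r:ℤ) + ((q+1:ℕ):ℤ)) (i + (r:ℤ) - 1 - ((M+1:ℕ):ℤ) + ((q+1:ℕ):ℤ)) := by
      intro q hq
      have hq' : q + 1 ≤ M := by have := Finset.mem_range.mp hq; omega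
      rw [wmid r M q hq' hM2]
      push_cast
      ring
    rw [Finset.sum_congr rfl mid, Finset.sum_add_distrib]
    push_cast
    ring

end QQ


/-- Fundamental WENO-2r identity: on a uniform grid `x_j = a + j h`, the Lagrange
interpolant of `f` on the `2r` nodes `{x_{i-r}, …, x_{i+r-1}}` evaluated at the midpoint
`x_{i-1/2}` equals the convex combination of the `r` interpolants of degree `r` on the
sub-stencils `{x_{i-r+k}, …, x_{i+k}}` with binomial weights `C̄_k^r = binom(2r,2k+1)/2^(2r-1)`. -/
theorem weno_midpoint_convex_combination (a h : ℝ) (hh : 0 < h) (r : ℕ) (hr : 1 ≤ r)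
    (i : ℤ) (f : ℝ → ℝ) :
    let x : ℤ → ℝ := fun j => a + (j : ℝ) * h
    let m : ℝ := a + ((i : ℝ) - 1 / 2) * h
    (Lagrange.interpolate (Finset.Icc (i - r) (i + r - 1)) x (fun j => f (x j))).eval m
      = ∑ k ∈ Finset.range r,
          ((Nat.choose (2 * r) (2 * k + 1) : ℝ) / 2 ^ (2 * r - 1))
            * (Lagrange.interpolate (Finset.Icc (i - r + k) (i + k)) x
                (fun j => f (x j))).eval m := by
  intro x m
  show Qe a h f i (i - r) (i + r - 1)
      = ∑ k ∈ Finset.range r, ((Nat.choose (2 * r) (2 * k + 1) : ℝ) / 2 ^ (2 * r - 1))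
          * Qe a h f i (i - r + k) (i + k)
  have key := mainInd a h (ne_of_gt hh) r hr i f (r - 1) le_rfl
  rw [show (r - 1) + 1 = r from by omega] at key
  rw [key]
  refine Finset.sum_congr rfl ?_
  intro p hp
  have hp' : p + 1 ≤ r := by have := Finset.mem_range.mp hp; omega
  have stf : (i + (r:ℤ) - 1 - ((r - 1 : ℕ) : ℤ) + (p:ℤ)) = i + (p:ℤ) := by
    have h1 : ((r - 1 : ℕ) : ℤ) = (r:ℤ) - 1 := by omega
    omega
  rw [Wfinal r p hp', stf]
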